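/- Let Q be a σ-finite measure on [0,∞) such that u(s,x) = ∫₀^∞ (1/√s) φ((x-θ)/√s) Q(dθ) is finite for all (s,x) ∈ (0,δ) × ℝ. Then u satisfies the heat equation ∂u/∂s = (1/2) ∂²u/∂x² on (0,δ) × ℝ, and for every e < 0, u(s,x) → 0 as (s,x) → (0,e). -/

import Mathlib

open MeasureTheory Real

/-- The standard normal density. -/
noncomputable def stdNormalPDF (z : ℝ) : ℝ :=
  (Real.sqrt (2 * Real.pi))⁻¹ * Real.exp (-z ^ 2 / 2)

noncomputable def Kk (v x θ : ℝ) : ℝ :=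
  (Real.sqrt (2 * Real.pi * v))⁻¹ * Real.exp (-(x - θ) ^ 2 / (2 * v))

lemma kernel_eq {v : ℝ} (hv : 0 < v) (x θ : ℝ) :
    (Real.sqrt v)⁻¹ * stdNormalPDF ((x - θ) / Real.sqrt v) = Kk v x θ := by
  have hsv : (0:ℝ) < Real.sqrt v := Real.sqrt_pos.2 hv
  unfold stdNormalPDF Kk
  rw [div_pow, Real.sq_sqrt hv.le, Real.sqrt_mul (by positivity) v, mul_inv]
  ring_nf

lemma Kk_nonneg (v x θ : ℝ) : 0 ≤ Kk v x θ := by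
  unfold Kk; positivity

lemma hasDerivAt_Kk_x {v : ℝ} (hv : 0 < v) (x θ : ℝ) :
    HasDerivAt (fun x' => Kk v x' θ) (-((x - θ) / v) * Kk v x θ) x := by
  have h1 : HasDerivAt (fun x' : ℝ => -(x' - θ) ^ 2 / (2 * v))
      (-((x - θ) / v)) x := by
    have h := (((hasDerivAt_id x).sub_const θ).pow 2).neg.div_const (2 * v)
    simp only [id_eq] at h
    refine h.congr_deriv ?_
    field_simp; ring
  have := (h1.exp).const_mul (Real.sqrt (2 * Real.pi * v))⁻¹
  refine this.congr_deriv ?_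
  unfold Kk; ring

lemma hasDerivAt_Kk_x2 {v : ℝ} (hv : 0 < v) (x θ : ℝ) :
    HasDerivAt (fun x' => -((x' - θ) / v) * Kk v x' θ)
      (((x - θ) ^ 2 / v ^ 2 - 1 / v) * Kk v x θ) x := by
  have h1 : HasDerivAt (fun x' : ℝ => -((x' - θ) / v)) (-(1 / v)) x := by
    exact (((hasDerivAt_id x).sub_const θ).div_const v).neg
  have := h1.mul (hasDerivAt_Kk_x hv x θ)
  refine this.congr_deriv ?_
  ring

lemma hasDerivAt_Kk_s {s : ℝ} (hs : 0 < s) (x θ : ℝ) :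
    HasDerivAt (fun s' => Kk s' x θ)
      ((1 / 2) * (((x - θ) ^ 2 / s ^ 2 - 1 / s) * Kk s x θ)) s := by
  have h2πs : (0:ℝ) < 2 * Real.pi * s := by positivity
  have hss : Real.sqrt (2 * Real.pi * s) ≠ 0 := by positivity
  have hc : HasDerivAt (fun s' : ℝ => (Real.sqrt (2 * Real.pi * s'))⁻¹)
      (-(2 * Real.pi * 1 / (2 * Real.sqrt (2 * Real.pi * s))) /
        (Real.sqrt (2 * Real.pi * s)) ^ 2) s := by
    have h := (((hasDerivAt_id s).const_mul (2 * Real.pi)).sqrt h2πs.ne').inv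
      (by positivity : Real.sqrt (2 * Real.pi * id s) ≠ 0)
    exact h.congr_deriv (by simp)
  have he : HasDerivAt (fun s' : ℝ => Real.exp (-(x - θ) ^ 2 / (2 * s')))
      (((x - θ) ^ 2 / (2 * s ^ 2)) * Real.exp (-(x - θ) ^ 2 / (2 * s))) s := by
    have hd : HasDerivAt (fun s' : ℝ => -(x - θ) ^ 2 / (2 * s'))
        ((x - θ) ^ 2 / (2 * s ^ 2)) s := by
      have h := ((hasDerivAt_id s).const_mul (2:ℝ)).inv (by positivity : 2 * id s ≠ 0)
      have h2 := h.const_mul (-(x - θ) ^ 2)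
      simp only [id_eq] at h2
      have hfun : (fun s' : ℝ => -(x - θ) ^ 2 / (2 * s')) =
          fun y : ℝ => -(x - θ) ^ 2 * (2 * y)⁻¹ := by
        funext s'; rw [div_eq_mul_inv]
      rw [hfun]
      refine h2.congr_deriv ?_
      field_simp
    simpa [mul_comm] using hd.exp
  have h1 : Real.sqrt (2 * Real.pi * s) ^ 2 = 2 * Real.pi * s := Real.sq_sqrt h2πs.le
  have hkey : -(2 * Real.pi * 1 / (2 * Real.sqrt (2 * Real.pi * s))) /
      Real.sqrt (2 * Real.pi * s) ^ 2 = -(1 / (2 * s)) * (Real.sqrt (2 * Real.pi * s))⁻¹ := by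
    rw [h1]
    field_simp
  have := hc.mul he
  rw [hkey] at this
  refine this.congr_deriv ?_
  unfold Kk
  field_simp
  ring

lemma dom_bound (b B : ℝ) (hb : 0 < b) (hB : b < B) (m : ℕ) :
    ∃ C : ℝ, 0 ≤ C ∧ ∀ y y₀ s : ℝ, |y - y₀| ≤ 1 → 0 < s → s ≤ b →
      |y| ^ m * Real.exp (-y ^ 2 / (2 * s)) ≤ C * Real.exp (-y₀ ^ 2 / (2 * B)) := by
  have hB0 : 0 < B := hb.trans hB
  set c : ℝ := 1 / (2 * b) - 1 / (2 * B) with hc_def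
  have hc : 0 < c := by
    rw [hc_def, sub_pos]
    apply one_div_lt_one_div_of_lt (by positivity)
    linarith
  set α : ℝ := 1 + 1 / B with hα_def
  have hα : 0 < α := by rw [hα_def]; positivity
  set E : ℝ := α ^ 2 / (4 * c) + 1 / (2 * B) with hE_def
  refine ⟨(m.factorial : ℝ) * Real.exp E, by positivity, ?_⟩
  intro y y₀ s hyy hs hsb
  set t : ℝ := |y| with ht_def
  have ht : 0 ≤ t := abs_nonneg y
  have hysq : y ^ 2 = t ^ 2 := (sq_abs y).symm
  have h1 : t ^ m ≤ (m.factorial : ℝ) * Real.exp t := by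
    have h := Real.pow_div_factorial_le_exp (x := t) ht m
    rw [div_le_iff₀ (by positivity)] at h
    linarith [h]
  have h2 : Real.exp (-y ^ 2 / (2 * s)) ≤ Real.exp (-y ^ 2 / (2 * b)) := by
    apply Real.exp_le_exp.2
    rw [neg_div, neg_div, neg_le_neg_iff]
    apply div_le_div_of_nonneg_left (by positivity) (by positivity)
    linarith
  have habs : |y₀| ≤ t + 1 := by
    have h := abs_sub_abs_le_abs_sub y₀ y
    rw [abs_sub_comm] at h
    linarith [hyy, h]
  have hy₀ : y₀ ^ 2 ≤ (t + 1) ^ 2 := by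
    rw [← sq_abs y₀]
    exact pow_le_pow_left₀ (abs_nonneg _) habs 2
  have key : α * t - c * t ^ 2 ≤ α ^ 2 / (4 * c) := by
    rw [le_div_iff₀ (by positivity)]
    nlinarith [sq_nonneg (2 * c * t - α)]
  have q1 : y₀ ^ 2 / (2 * B) ≤ (t + 1) ^ 2 / (2 * B) := by gcongr
  have q2 : t - t ^ 2 / (2 * b) + (t + 1) ^ 2 / (2 * B) = α * t - c * t ^ 2 + 1 / (2 * B) := by
    rw [hα_def, hc_def]
    field_simp
    ring
  have hmain : t + -y ^ 2 / (2 * b) ≤ E + -y₀ ^ 2 / (2 * B) := by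
    have e1 : -y ^ 2 / (2 * b) = -(t ^ 2 / (2 * b)) := by rw [hysq]; ring
    have e2 : -y₀ ^ 2 / (2 * B) = -(y₀ ^ 2 / (2 * B)) := by ring
    rw [e1, e2, hE_def]
    linarith [q1, q2, key]
  calc |y| ^ m * Real.exp (-y ^ 2 / (2 * s))
      ≤ ((m.factorial : ℝ) * Real.exp t) * Real.exp (-y ^ 2 / (2 * b)) := by
        apply mul_le_mul h1 h2 (Real.exp_pos _).le (by positivity)
    _ = (m.factorial : ℝ) * Real.exp (t + -y ^ 2 / (2 * b)) := by
        rw [mul_assoc, ← Real.exp_add]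
    _ ≤ (m.factorial : ℝ) * Real.exp (E + -y₀ ^ 2 / (2 * B)) := by
        apply mul_le_mul_of_nonneg_left (Real.exp_le_exp.2 hmain) (by positivity)
    _ = ((m.factorial : ℝ) * Real.exp E) * Real.exp (-y₀ ^ 2 / (2 * B)) := by
        rw [Real.exp_add, mul_assoc]

lemma continuous_Kk_theta (v x : ℝ) : Continuous (fun θ => Kk v x θ) := by
  unfold Kk; fun_prop

lemma integrable_exp_of {δ : ℝ} (Q : Measure ℝ)
    (hK : ∀ v x : ℝ, 0 < v → v < δ → Integrable (fun θ => Kk v x θ) Q)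
    {B : ℝ} (x₀ : ℝ) (hB : 0 < B) (hBδ : B < δ) :
    Integrable (fun θ => Real.exp (-(x₀ - θ) ^ 2 / (2 * B))) Q := by
  have h := (hK B x₀ hB hBδ).const_mul (Real.sqrt (2 * Real.pi * B))
  apply h.congr
  filter_upwards with θ
  unfold Kk
  rw [← mul_assoc, mul_inv_cancel₀ (by positivity), one_mul]

lemma stepA {δ : ℝ} (Q : Measure ℝ)
    (hK : ∀ v x : ℝ, 0 < v → v < δ → Integrable (fun θ => Kk v x θ) Q)
    {s : ℝ} (hs : 0 < s) (hsδ : s < δ) (x₀ : ℝ) :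
    Integrable (fun θ => -((x₀ - θ) / s) * Kk s x₀ θ) Q ∧
      HasDerivAt (fun x' => ∫ θ, Kk s x' θ ∂Q)
        (∫ θ, -((x₀ - θ) / s) * Kk s x₀ θ ∂Q) x₀ := by
  set B := (s + δ) / 2 with hB_def
  have hsB : s < B := by rw [hB_def]; linarith
  have hB0 : 0 < B := hs.trans hsB
  have hBδ : B < δ := by rw [hB_def]; linarith
  obtain ⟨C, hC0, hC⟩ := dom_bound s B hs hsB 1
  have hexp_int : Integrable (fun θ => Real.exp (-(x₀ - θ) ^ 2 / (2 * B))) Q :=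
    integrable_exp_of Q hK x₀ hB0 hBδ
  apply hasDerivAt_integral_of_dominated_loc_of_deriv_le
    (F' := fun x θ => -((x - θ) / s) * Kk s x θ)
    (bound := fun θ => (1 / s) * (Real.sqrt (2 * Real.pi * s))⁻¹ * C *
      Real.exp (-(x₀ - θ) ^ 2 / (2 * B)))
    (Metric.ball_mem_nhds x₀ one_pos)
  · exact Filter.Eventually.of_forall fun x => (continuous_Kk_theta s x).aestronglyMeasurable
  · exact hK s x₀ hs hsδ
  · apply Continuous.aestronglyMeasurable
    have := continuous_Kk_theta s x₀
    fun_prop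
  · apply Filter.Eventually.of_forall
    intro θ x hx
    have hx1 : |x - θ - (x₀ - θ)| ≤ 1 := by
      rw [show x - θ - (x₀ - θ) = x - x₀ by ring]
      exact le_of_lt (by simpa [Real.dist_eq] using hx)
    have hC1 := hC (x - θ) (x₀ - θ) s hx1 hs le_rfl
    rw [pow_one] at hC1
    calc ‖-((x - θ) / s) * Kk s x θ‖
        = |x - θ| / s * Kk s x θ := by
          rw [Real.norm_eq_abs, abs_mul, abs_neg, abs_div, abs_of_pos hs,
            abs_of_nonneg (Kk_nonneg s x θ)]
      _ = (1 / s) * (Real.sqrt (2 * Real.pi * s))⁻¹ *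
            (|x - θ| * Real.exp (-(x - θ) ^ 2 / (2 * s))) := by
          unfold Kk; ring
      _ ≤ (1 / s) * (Real.sqrt (2 * Real.pi * s))⁻¹ *
            (C * Real.exp (-(x₀ - θ) ^ 2 / (2 * B))) := by
          apply mul_le_mul_of_nonneg_left hC1 (by positivity)
      _ = (1 / s) * (Real.sqrt (2 * Real.pi * s))⁻¹ * C *
            Real.exp (-(x₀ - θ) ^ 2 / (2 * B)) := by ring
  · exact hexp_int.const_mul _
  · apply Filter.Eventually.of_forall
    intro θ x _
    exact hasDerivAt_Kk_x hs x θ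

lemma stepB {δ : ℝ} (Q : Measure ℝ)
    (hK : ∀ v x : ℝ, 0 < v → v < δ → Integrable (fun θ => Kk v x θ) Q)
    {s : ℝ} (hs : 0 < s) (hsδ : s < δ) (x₀ : ℝ) :
    HasDerivAt (fun x' => ∫ θ, -((x' - θ) / s) * Kk s x' θ ∂Q)
      (∫ θ, ((x₀ - θ) ^ 2 / s ^ 2 - 1 / s) * Kk s x₀ θ ∂Q) x₀ := by
  set B := (s + δ) / 2 with hB_def
  have hsB : s < B := by rw [hB_def]; linarith
  have hB0 : 0 < B := hs.trans hsB
  have hBδ : B < δ := by rw [hB_def]; linarith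
  obtain ⟨C2, hC20, hC2⟩ := dom_bound s B hs hsB 2
  obtain ⟨C0, hC00, hC0⟩ := dom_bound s B hs hsB 0
  have hexp_int : Integrable (fun θ => Real.exp (-(x₀ - θ) ^ 2 / (2 * B))) Q :=
    integrable_exp_of Q hK x₀ hB0 hBδ
  refine (hasDerivAt_integral_of_dominated_loc_of_deriv_le
    (F' := fun x θ => ((x - θ) ^ 2 / s ^ 2 - 1 / s) * Kk s x θ)
    (bound := fun θ => (Real.sqrt (2 * Real.pi * s))⁻¹ *
        ((1 / s ^ 2) * C2 + (1 / s) * C0) * Real.exp (-(x₀ - θ) ^ 2 / (2 * B)))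
    (Metric.ball_mem_nhds x₀ one_pos) ?_ ?_ ?_ ?_ ?_ ?_).2
  · refine Filter.Eventually.of_forall fun x => Continuous.aestronglyMeasurable ?_
    have := continuous_Kk_theta s x
    fun_prop
  · exact (stepA Q hK hs hsδ x₀).1
  · apply Continuous.aestronglyMeasurable
    have := continuous_Kk_theta s x₀
    fun_prop
  · apply Filter.Eventually.of_forall
    intro θ x hx
    have hx1 : |x - θ - (x₀ - θ)| ≤ 1 := by
      rw [show x - θ - (x₀ - θ) = x - x₀ by ring]
      exact le_of_lt (by simpa [Real.dist_eq] using hx)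
    have h2 := hC2 (x - θ) (x₀ - θ) s hx1 hs le_rfl
    have h0 := hC0 (x - θ) (x₀ - θ) s hx1 hs le_rfl
    rw [pow_zero, one_mul] at h0
    rw [sq_abs] at h2
    have habs : |(x - θ) ^ 2 / s ^ 2 - 1 / s| ≤ (x - θ) ^ 2 / s ^ 2 + 1 / s := by
      have hA : 0 ≤ (x - θ) ^ 2 / s ^ 2 := by positivity
      have hc : 0 < 1 / s := by positivity
      rw [abs_le]
      constructor <;> linarith
    calc ‖((x - θ) ^ 2 / s ^ 2 - 1 / s) * Kk s x θ‖
        = |(x - θ) ^ 2 / s ^ 2 - 1 / s| * Kk s x θ := by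
          rw [Real.norm_eq_abs, abs_mul, abs_of_nonneg (Kk_nonneg s x θ)]
      _ ≤ ((x - θ) ^ 2 / s ^ 2 + 1 / s) * Kk s x θ := by
          apply mul_le_mul_of_nonneg_right habs (Kk_nonneg s x θ)
      _ = (Real.sqrt (2 * Real.pi * s))⁻¹ *
            ((1 / s ^ 2) * ((x - θ) ^ 2 * Real.exp (-(x - θ) ^ 2 / (2 * s))) +
             (1 / s) * Real.exp (-(x - θ) ^ 2 / (2 * s))) := by
          unfold Kk; ring
      _ ≤ (Real.sqrt (2 * Real.pi * s))⁻¹ *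
            ((1 / s ^ 2) * (C2 * Real.exp (-(x₀ - θ) ^ 2 / (2 * B))) +
             (1 / s) * (C0 * Real.exp (-(x₀ - θ) ^ 2 / (2 * B)))) := by
          apply mul_le_mul_of_nonneg_left _ (by positivity)
          have t1 : (1 / s ^ 2) * ((x - θ) ^ 2 * Real.exp (-(x - θ) ^ 2 / (2 * s))) ≤
              (1 / s ^ 2) * (C2 * Real.exp (-(x₀ - θ) ^ 2 / (2 * B))) :=
            mul_le_mul_of_nonneg_left h2 (by positivity)
          have t2 : (1 / s) * Real.exp (-(x - θ) ^ 2 / (2 * s)) ≤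
              (1 / s) * (C0 * Real.exp (-(x₀ - θ) ^ 2 / (2 * B))) :=
            mul_le_mul_of_nonneg_left h0 (by positivity)
          linarith
      _ = (Real.sqrt (2 * Real.pi * s))⁻¹ * ((1 / s ^ 2) * C2 + (1 / s) * C0) *
            Real.exp (-(x₀ - θ) ^ 2 / (2 * B)) := by ring
  · exact hexp_int.const_mul _
  · apply Filter.Eventually.of_forall
    intro θ x _
    exact hasDerivAt_Kk_x2 hs x θ

lemma stepC {δ : ℝ} (Q : Measure ℝ)
    (hK : ∀ v x : ℝ, 0 < v → v < δ → Integrable (fun θ => Kk v x θ) Q)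
    {s₀ : ℝ} (hs : 0 < s₀) (hsδ : s₀ < δ) (x : ℝ) :
    HasDerivAt (fun s' => ∫ θ, Kk s' x θ ∂Q)
      (∫ θ, (1 / 2) * (((x - θ) ^ 2 / s₀ ^ 2 - 1 / s₀) * Kk s₀ x θ) ∂Q) s₀ := by
  set a := s₀ / 2 with ha_def
  set b := (s₀ + δ) / 2 with hb_def
  have ha0 : 0 < a := by rw [ha_def]; linarith
  have hab : a < b := by rw [ha_def, hb_def]; linarith
  have hbδ : b < δ := by rw [hb_def]; linarith
  set B := (b + δ) / 2 with hB_def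
  have hbB : b < B := by rw [hB_def]; linarith
  have hB0 : 0 < B := (ha0.trans hab).trans hbB
  have hBδ : B < δ := by rw [hB_def]; linarith
  set ε := min (s₀ / 2) ((δ - s₀) / 2) with hε_def
  have hε0 : 0 < ε := by
    rw [hε_def]; apply lt_min <;> linarith
  have hball : ∀ s' ∈ Metric.ball s₀ ε, a ≤ s' ∧ s' ≤ b := by
    intro s' hs'
    rw [Metric.mem_ball, Real.dist_eq] at hs'
    have h1 := abs_lt.1 hs'
    have e1 : ε ≤ s₀ / 2 := min_le_left _ _
    have e2 : ε ≤ (δ - s₀) / 2 := min_le_right _ _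
    constructor
    · rw [ha_def]; linarith [h1.1]
    · rw [hb_def]; linarith [h1.2]
  obtain ⟨C2, hC20, hC2⟩ := dom_bound b B (ha0.trans hab) hbB 2
  obtain ⟨C0, hC00, hC0⟩ := dom_bound b B (ha0.trans hab) hbB 0
  have hexp_int : Integrable (fun θ => Real.exp (-(x - θ) ^ 2 / (2 * B))) Q :=
    integrable_exp_of Q hK x hB0 hBδ
  refine (hasDerivAt_integral_of_dominated_loc_of_deriv_le
    (F' := fun s' θ => (1 / 2) * (((x - θ) ^ 2 / s' ^ 2 - 1 / s') * Kk s' x θ))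
    (bound := fun θ => (1 / 2) * (Real.sqrt (2 * Real.pi * a))⁻¹ *
        ((1 / a ^ 2) * C2 + (1 / a) * C0) * Real.exp (-(x - θ) ^ 2 / (2 * B)))
    (Metric.ball_mem_nhds s₀ hε0) ?_ ?_ ?_ ?_ ?_ ?_).2
  · refine Filter.Eventually.of_forall fun s' => (continuous_Kk_theta s' x).aestronglyMeasurable
  · exact hK s₀ x hs hsδ
  · apply Continuous.aestronglyMeasurable
    have := continuous_Kk_theta s₀ x
    fun_prop
  · apply Filter.Eventually.of_forall
    intro θ s' hs'
    obtain ⟨has', hs'b⟩ := hball s' hs'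
    have hs'0 : 0 < s' := ha0.trans_le has'
    have h2 := hC2 (x - θ) (x - θ) s' (by simp) hs'0 hs'b
    have h0 := hC0 (x - θ) (x - θ) s' (by simp) hs'0 hs'b
    rw [pow_zero, one_mul] at h0
    rw [sq_abs] at h2
    have hsqrt : (Real.sqrt (2 * Real.pi * s'))⁻¹ ≤ (Real.sqrt (2 * Real.pi * a))⁻¹ := by
      apply inv_anti₀ (by positivity)
      apply Real.sqrt_le_sqrt
      nlinarith [Real.pi_pos]
    have habs : |(x - θ) ^ 2 / s' ^ 2 - 1 / s'| ≤ (x - θ) ^ 2 / a ^ 2 + 1 / a := by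
      have hA : 0 ≤ (x - θ) ^ 2 / s' ^ 2 := by positivity
      have hA2 : (x - θ) ^ 2 / s' ^ 2 ≤ (x - θ) ^ 2 / a ^ 2 := by
        apply div_le_div_of_nonneg_left (by positivity) (by positivity)
        nlinarith
      have hc : 0 < 1 / s' := by positivity
      have hc2 : 1 / s' ≤ 1 / a := by
        apply div_le_div_of_nonneg_left (by norm_num) ha0 has'
      rw [abs_le]
      constructor <;> linarith
    have hKle : Kk s' x θ ≤ (Real.sqrt (2 * Real.pi * a))⁻¹ *
        Real.exp (-(x - θ) ^ 2 / (2 * s')) := by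
      unfold Kk
      apply mul_le_mul_of_nonneg_right hsqrt (Real.exp_pos _).le
    calc ‖(1 / 2) * (((x - θ) ^ 2 / s' ^ 2 - 1 / s') * Kk s' x θ)‖
        = (1 / 2) * (|(x - θ) ^ 2 / s' ^ 2 - 1 / s'| * Kk s' x θ) := by
          rw [Real.norm_eq_abs, abs_mul, abs_mul, abs_of_nonneg (Kk_nonneg s' x θ)]
          norm_num
      _ ≤ (1 / 2) * (((x - θ) ^ 2 / a ^ 2 + 1 / a) *
            ((Real.sqrt (2 * Real.pi * a))⁻¹ * Real.exp (-(x - θ) ^ 2 / (2 * s')))) := by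
          apply mul_le_mul_of_nonneg_left _ (by norm_num)
          apply mul_le_mul habs hKle (Kk_nonneg s' x θ) (by positivity)
      _ = (1 / 2) * (Real.sqrt (2 * Real.pi * a))⁻¹ *
            ((1 / a ^ 2) * ((x - θ) ^ 2 * Real.exp (-(x - θ) ^ 2 / (2 * s'))) +
             (1 / a) * Real.exp (-(x - θ) ^ 2 / (2 * s'))) := by ring
      _ ≤ (1 / 2) * (Real.sqrt (2 * Real.pi * a))⁻¹ *
            ((1 / a ^ 2) * (C2 * Real.exp (-(x - θ) ^ 2 / (2 * B))) +
             (1 / a) * (C0 * Real.exp (-(x - θ) ^ 2 / (2 * B)))) := by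
          apply mul_le_mul_of_nonneg_left _ (by positivity)
          have t1 := mul_le_mul_of_nonneg_left h2 (by positivity : (0:ℝ) ≤ 1 / a ^ 2)
          have t2 := mul_le_mul_of_nonneg_left h0 (by positivity : (0:ℝ) ≤ 1 / a)
          linarith
      _ = (1 / 2) * (Real.sqrt (2 * Real.pi * a))⁻¹ *
            ((1 / a ^ 2) * C2 + (1 / a) * C0) * Real.exp (-(x - θ) ^ 2 / (2 * B)) := by
          ring
  · exact hexp_int.const_mul _
  · apply Filter.Eventually.of_forall
    intro θ s' hs'
    exact hasDerivAt_Kk_s (ha0.trans_le (hball s' hs').1) x θ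

lemma A_tendsto (k : ℝ) (hk : 0 < k) :
    Filter.Tendsto (fun s : ℝ => (Real.sqrt (2 * Real.pi * s))⁻¹ * Real.exp (-k / s))
      (nhdsWithin 0 (Set.Ioi 0)) (nhds 0) := by
  have h1 : Filter.Tendsto (fun t : ℝ => t * Real.exp (-(k * t))) Filter.atTop (nhds 0) := by
    have hcomp : Filter.Tendsto (fun t : ℝ => (k * t) * Real.exp (-(k * t)))
        Filter.atTop (nhds 0) := by
      have hin : Filter.Tendsto (fun t : ℝ => k * t) Filter.atTop Filter.atTop :=
        Filter.Tendsto.const_mul_atTop hk Filter.tendsto_id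
      have := (tendsto_pow_mul_exp_neg_atTop_nhds_zero 1).comp hin
      simpa [Function.comp_def, pow_one] using this
    have := hcomp.const_mul (1 / k)
    rw [mul_zero] at this
    apply this.congr
    intro t
    field_simp
  have h2 : Filter.Tendsto (fun t : ℝ => Real.sqrt t * Real.exp (-(k * t)))
      Filter.atTop (nhds 0) := by
    apply squeeze_zero' (g := fun t : ℝ => t * Real.exp (-(k * t)))
    · filter_upwards [Filter.eventually_ge_atTop (0:ℝ)] with t ht
      positivity
    · filter_upwards [Filter.eventually_ge_atTop (1:ℝ)] with t ht
      have hst : Real.sqrt t ≤ t := by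
        nlinarith [Real.sq_sqrt (by linarith : (0:ℝ) ≤ t), Real.sqrt_nonneg t]
      exact mul_le_mul_of_nonneg_right hst (Real.exp_pos _).le
    · exact h1
  have h3 := (h2.comp tendsto_inv_nhdsGT_zero).const_mul (Real.sqrt (2 * Real.pi))⁻¹
  rw [mul_zero] at h3
  apply h3.congr'
  filter_upwards [self_mem_nhdsWithin] with s hs
  have hs0 : (0:ℝ) < s := hs
  simp only [Function.comp]
  rw [Real.sqrt_inv, Real.sqrt_mul (by positivity) s, mul_inv]
  rw [show -(k * s⁻¹) = -k / s by field_simp]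
  ring

/-- Widder, direction (2) ⟹ (1): if `Q` is a σ-finite measure on
`[0,∞)` such that `u(s,x) = ∫ φ((x-θ)/√s)/√s Q(dθ)` is finite on `(0,δ) × ℝ`,
then `u` solves the heat equation `∂u/∂s = (1/2) ∂²u/∂x²` there, and
`u(s,x) → 0` as `(s,x) → (0,e)` for every `e < 0`. -/
theorem stmt3 (δ : ℝ) (hδ : 0 < δ) (Q : Measure ℝ) [SigmaFinite Q]
    (hQsupp : Q (Set.Iio 0) = 0)
    (u : ℝ → ℝ → ℝ)
    (hu : ∀ s x : ℝ, u s x = ∫ θ, (Real.sqrt s)⁻¹ * stdNormalPDF ((x - θ) / Real.sqrt s) ∂Q)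
    (hfin : ∀ s x : ℝ, 0 < s → s < δ →
      Integrable (fun θ => (Real.sqrt s)⁻¹ * stdNormalPDF ((x - θ) / Real.sqrt s)) Q) :
    (∀ s ∈ Set.Ioo (0:ℝ) δ, ∀ x : ℝ,
        deriv (fun s' => u s' x) s = (1/2) * iteratedDeriv 2 (fun x' => u s x') x)
    ∧ ∀ e : ℝ, e < 0 →
        Filter.Tendsto (fun q : ℝ × ℝ => u q.1 q.2)
          (nhdsWithin ((0 : ℝ), e) (Set.Ioi 0 ×ˢ Set.univ)) (nhds 0) := by
  have hK : ∀ v x : ℝ, 0 < v → v < δ → Integrable (fun θ => Kk v x θ) Q := by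
    intro v x hv hvδ
    apply (hfin v x hv hvδ).congr
    filter_upwards with θ
    exact kernel_eq hv x θ
  have huK : ∀ s : ℝ, 0 < s → ∀ x : ℝ, u s x = ∫ θ, Kk s x θ ∂Q := by
    intro s hs x
    rw [hu s x]
    congr 1
    funext θ
    exact kernel_eq hs x θ
  constructor
  · rintro s ⟨hs, hsδ⟩ x
    have hux : (fun x' => u s x') = fun x' => ∫ θ, Kk s x' θ ∂Q :=
      funext fun x' => huK s hs x'
    have hd1 : deriv (fun x' => u s x') = fun x' => ∫ θ, -((x' - θ) / s) * Kk s x' θ ∂Q := by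
      funext x'
      rw [hux]
      exact ((stepA Q hK hs hsδ x').2).deriv
    have hd2 : deriv (fun s' => u s' x) s =
        ∫ θ, (1 / 2) * (((x - θ) ^ 2 / s ^ 2 - 1 / s) * Kk s x θ) ∂Q := by
      have hev : (fun s' => u s' x) =ᶠ[nhds s] (fun s' => ∫ θ, Kk s' x θ ∂Q) := by
        filter_upwards [Ioi_mem_nhds hs] with s' hs'
        exact huK s' hs' x
      exact ((stepC Q hK hs hsδ x).congr_of_eventuallyEq hev).deriv
    have hiter : iteratedDeriv 2 (fun x' => u s x') x =
        ∫ θ, ((x - θ) ^ 2 / s ^ 2 - 1 / s) * Kk s x θ ∂Q := by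
      rw [show (2:ℕ) = 1 + 1 from rfl, iteratedDeriv_succ, iteratedDeriv_one, hd1]
      exact (stepB Q hK hs hsδ x).deriv
    rw [hd2, hiter, MeasureTheory.integral_const_mul]
  · intro e he
    set S := δ / 2 with hS_def
    have hS0 : 0 < S := by rw [hS_def]; linarith
    have hSδ : S < δ := by rw [hS_def]; linarith
    have hJint : Integrable (fun θ => Real.exp (-(e - θ) ^ 2 / (2 * S))) Q :=
      integrable_exp_of Q hK e hS0 hSδ
    set J := ∫ θ, Real.exp (-(e - θ) ^ 2 / (2 * S)) ∂Q with hJ_def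
    set k := e ^ 2 / 16 with hk_def
    have he0 : e ≠ 0 := ne_of_lt he
    have hk0 : 0 < k := by rw [hk_def]; positivity
    have hfst : Filter.Tendsto (fun q : ℝ × ℝ => q.1)
        (nhdsWithin ((0:ℝ), e) (Set.Ioi 0 ×ˢ Set.univ)) (nhdsWithin 0 (Set.Ioi 0)) := by
      apply tendsto_nhdsWithin_of_tendsto_nhds_of_eventually_within
      · exact (continuous_fst.tendsto _).mono_left nhdsWithin_le_nhds
      · filter_upwards [self_mem_nhdsWithin] with q hq
        exact hq.1
    have hupper : Filter.Tendsto (fun q : ℝ × ℝ =>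
        (Real.sqrt (2 * Real.pi * q.1))⁻¹ * Real.exp (-k / q.1) * J)
        (nhdsWithin ((0:ℝ), e) (Set.Ioi 0 ×ˢ Set.univ)) (nhds 0) := by
      have h := ((A_tendsto k hk0).comp hfst).mul_const J
      rw [zero_mul] at h
      exact h
    have haeθ : ∀ᵐ θ ∂Q, 0 ≤ θ := by
      rw [MeasureTheory.ae_iff]
      convert hQsupp using 2
      ext θ
      simp [not_le]
    apply squeeze_zero' ?_ ?_ hupper
    · filter_upwards [self_mem_nhdsWithin] with q _
      rw [hu]
      apply integral_nonneg
      intro θ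
      simp only [stdNormalPDF]
      positivity
    · have hmem : (Set.Iio (δ/16) ×ˢ Metric.ball e (-e/2)) ∈
          nhdsWithin ((0:ℝ), e) (Set.Ioi 0 ×ˢ Set.univ) := by
        apply mem_nhdsWithin_of_mem_nhds
        apply IsOpen.mem_nhds (isOpen_Iio.prod Metric.isOpen_ball)
        refine ⟨?_, ?_⟩
        · show (0:ℝ) ∈ Set.Iio (δ/16)
          simp only [Set.mem_Iio]
          linarith
        · show e ∈ Metric.ball e (-e/2)
          simp only [Metric.mem_ball, dist_self]
          linarith
      filter_upwards [self_mem_nhdsWithin, hmem] with q hq1 hq2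
      obtain ⟨s, x⟩ := q
      have hs : 0 < s := hq1.1
      have hs16 : s < δ / 16 := hq2.1
      have hxe : |x - e| < -e / 2 := by
        have := hq2.2
        rwa [Metric.mem_ball, Real.dist_eq] at this
      have hsδ' : s < δ := by linarith
      have hxle : x ≤ e / 2 := by
        have := (abs_lt.1 hxe).2
        linarith
      have h16 : 16 * s ≤ 2 * S := by rw [hS_def]; linarith
      have hbound : (fun θ => Kk s x θ) ≤ᵐ[Q]
          fun θ => ((Real.sqrt (2 * Real.pi * s))⁻¹ * Real.exp (-k / s)) *
            Real.exp (-(e - θ) ^ 2 / (2 * S)) := by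
        filter_upwards [haeθ] with θ hθ
        have hf1 : (0:ℝ) ≤ θ - x - e/2 := by linarith
        have hf2 : (0:ℝ) ≤ θ - x + e/2 := by linarith
        have hq1' : e ^ 2 / 4 ≤ (x - θ) ^ 2 := by nlinarith [mul_nonneg hf1 hf2]
        have hg1 : (0:ℝ) ≤ θ - x - (θ - e)/2 := by linarith
        have hg2 : (0:ℝ) ≤ θ - x + (θ - e)/2 := by linarith
        have hq2' : (θ - e) ^ 2 / 4 ≤ (x - θ) ^ 2 := by nlinarith [mul_nonneg hg1 hg2]
        have t1 : e ^ 2 / (16 * s) ≤ (x - θ) ^ 2 / (4 * s) := by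
          rw [div_le_div_iff₀ (by positivity) (by positivity)]
          nlinarith [mul_le_mul_of_nonneg_right hq1' hs.le]
        have t2 : (e - θ) ^ 2 / (2 * S) ≤ (x - θ) ^ 2 / (4 * s) := by
          rw [div_le_div_iff₀ (by positivity) (by positivity)]
          nlinarith [mul_le_mul_of_nonneg_right hq2' hs.le,
            mul_le_mul_of_nonneg_left h16 (sq_nonneg (x - θ))]
        have hexp : -(x - θ) ^ 2 / (2 * s) ≤ -k / s + -(e - θ) ^ 2 / (2 * S) := by
          have hkk : -k / s = -(e ^ 2 / (16 * s)) := by rw [hk_def]; ring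
          have t3 : (x - θ) ^ 2 / (2 * s) = (x - θ) ^ 2 / (4 * s) + (x - θ) ^ 2 / (4 * s) := by
            ring
          have e1 : -(x - θ) ^ 2 / (2 * s) = -((x - θ) ^ 2 / (2 * s)) := by ring
          have e2 : -(e - θ) ^ 2 / (2 * S) = -((e - θ) ^ 2 / (2 * S)) := by ring
          rw [hkk, e1, e2]
          linarith
        calc Kk s x θ
            = (Real.sqrt (2 * Real.pi * s))⁻¹ * Real.exp (-(x - θ) ^ 2 / (2 * s)) := rfl
          _ ≤ (Real.sqrt (2 * Real.pi * s))⁻¹ *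
                Real.exp (-k / s + -(e - θ) ^ 2 / (2 * S)) := by
              apply mul_le_mul_of_nonneg_left (Real.exp_le_exp.2 hexp) (by positivity)
          _ = (Real.sqrt (2 * Real.pi * s))⁻¹ * Real.exp (-k / s) *
                Real.exp (-(e - θ) ^ 2 / (2 * S)) := by
              rw [Real.exp_add]; ring
      calc u s x = ∫ θ, Kk s x θ ∂Q := huK s hs x
        _ ≤ ∫ θ, ((Real.sqrt (2 * Real.pi * s))⁻¹ * Real.exp (-k / s)) *
              Real.exp (-(e - θ) ^ 2 / (2 * S)) ∂Q :=
            integral_mono_ae (hK s x hs hsδ') (hJint.const_mul _) hbound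
        _ = (Real.sqrt (2 * Real.pi * s))⁻¹ * Real.exp (-k / s) * J := by
            rw [MeasureTheory.integral_const_mul]
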